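/- Let k < t be coprime positive integers with t ≥ 56, and let B_i and B_{i+25} be two bands of D(k,t) (with 0 ≤ i and i + 25 ≤ t − 1). Then there is an assignment of colors from the set C = {1, 16, 17, 18, 19, 20, 21, 24, 25, 26, 27, 28, 29, 30} to the vertices of B_i and B_{i+25} such that any two distinct vertices of B_i ∪ B_{i+25} receiving the same color c are at distance greater than c in D(k,t). -/

import Mathlib

set_option maxRecDepth 8000
set_option maxHeartbeats 1000000
set_option exponentiation.threshold 3000


/-- The infinite distance graph `D(k,t)` on vertex set `ℤ`: distinct `i, j` are
adjacent iff `|i - j| ∈ {k, t}`. -/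
def distGraph (k t : ℕ) : SimpleGraph ℤ where
  Adj i j := i ≠ j ∧ ((i - j).natAbs = k ∨ (i - j).natAbs = t)
  symm := by
    constructor
    rintro i j ⟨hne, hd⟩
    refine ⟨hne.symm, ?_⟩
    rwa [show j - i = -(i - j) by ring, Int.natAbs_neg]
  loopless := by constructor; rintro i ⟨hne, -⟩; exact hne rfl

/-- `c` is a packing `p`-coloring of `G`: each vertex gets a color in `{1, …, p}`,
and any two distinct vertices with the same color `c` are at distance greater
than `c` (in particular, unreachable pairs have infinite distance). -/
def IsPackingColoring {V : Type*} (G : SimpleGraph V) (p : ℕ) (c : V → ℕ) : Prop :=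
  (∀ v, 1 ≤ c v ∧ c v ≤ p) ∧
  ∀ u v : V, u ≠ v → c u = c v → (c u : ℕ∞) < G.edist u v

/-- The packing chromatic number of `G`: the smallest `p` (as an element of `ℕ∞`,
being `⊤` if no finite packing coloring exists) admitting a packing `p`-coloring. -/
noncomputable def packingChromaticNumber {V : Type*} (G : SimpleGraph V) : ℕ∞ :=
  sInf {q : ℕ∞ | ∃ p : ℕ, q = p ∧ ∃ c : V → ℕ, IsPackingColoring G p c}

/-- The vertex set of the `i`-band of `D(k,t)`: the integers `i*k + j*t`, `j ∈ ℤ`. -/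
def bandSet (k t : ℕ) (i : ℕ) : Set ℤ :=
  {z : ℤ | ∃ j : ℤ, z = (i : ℤ) * k + j * t}

/-- The vertex set of the `i`-strip of `D(k,t)`: the union of the vertex sets of
the bands `B_i, B_{i+1}, …, B_{i+23}`. -/
def stripSet (k t : ℕ) (i : ℕ) : Set ℤ :=
  ⋃ m ∈ Finset.range 24, bandSet k t (i + m)


namespace TwoBandsAux

def m1 : ℕ :=
  620336744160244561964472387550333596617001483451932119739453067275590958679182320692095118444920516868464066798778259134164863110122648388538392577494354220566388387371706633097002588941524234831529386575497150497378435075985667665353027457923165415708069913106491022028578737452635661478347404767058188312823800264611138164850903961987886420465625366775564640765933340298665023615779707983552841926031109315159054728698669935200592583153889943506663280583960234788835431520492049813222705576265890079322356406022857839369406178544955280133941743926055850615009187567613957226858283658598900499327372565125361153840683837533800052052505516595342689352753895841745954538442642602535224085051247647628512931838967125054872707469299206977209222622881610202501089562537655223782298965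

def m16 : ℕ :=
  14539156306862667333128344073366189090205756481359137650461712622327670579561689343237189899439761238234441334619531742461739930838359560376325915008998691292288696872095102082946018637213529358305493755831130002801471600804079619636264804288119803148149460678870022919314969589773705079601745511797735617717983081175606481404845138318104583446962848673573969886734351907636073545647234005515353041041737936321968657738578922147763490081339539657506699292656491340247961865360650908130905568777236571297409027016940034857298854552779477140148312563620669332982674228430376806474858859965478302832231126845363223378055338871892410144762480626689494073249040412295074268754255240950418265645727512382716434851180215740540748390143945576279570147439184739090831084463082201728157696

def m17 : ℕ :=
  58156625227450669332513388132093327872719900826129201730035094201962239646187054095179442784963464430729359653859003805995892446954981705037415692555639930761141802326027280092316740861509416982315719640356941516545080829982469229064981282349460223688830134784170955574405815633359956912736416746230369342299450581825837050590589938443658272223825605616232990083823366068998026231934964975501588691927203920508970449178338256702321353322797511556923493371378643497072322726703409012728162217474818419904563721206301977449206653503776099698925489295785514230355354501196484485489462686356112284172244180816293065052302375398376257079413084900785062068380894089209133319785689522284228895277413069345448252187590602200094011188246331190657859869547133731529212188846977855690645504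

def m18 : ℕ :=
  232626500910010944069257777786988985389991587069626056595925631491331358228510365066247235616835744629740670064087378927431424574480744341677440664937216521259495174287359187227339854612338696080524351328552455984115994978877714182249903933652562742690709885698806468299876076105405918620245376766044376917130588587745900493432449807263589053293127632919828119789089813267159620834711499218083859705996108242228522415225101115716060546796388051214615481120625246410427177212338427927479672773199695978394914808781224110441530401797038447824757276927953028509134640131870557438070114358948344114447000276872873816952402154612751607409546958998290731097166740592534036085965537565859912224801980416220954712879648784262551769073503123527700437069044619869569153474018243367013449728

def m19 : ℕ :=
  216650156790922879271200083156148237626324578500587837351114502683653447702306858864743764042643563558800558238655405175381541996168773855569592472288100958030844177106915374536884248658246962249375544175107962289620789068182892429951189036220045205131082522234337450146214946094466816851789714574748659174356628357146171057674120411036970587447421504062890962721127033621019828941921857807529557394916963685070757418125959782753790124541225230313950046865323259683354211740405817243038863153761606793286227488630092477640541654783101401052858004648896097816615046044732389988441905272503216281680987524610256046504411487626036180891931371450542606447613551145621149642512547017531791108702884158416683822135762676720791053825052601087643031355399516472084192557157843072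

def m20 : ℕ :=
  3549596168861723812035703613686910418559601032685627008102719855436400764026810376218696780256769692696969938650577832027474073144946269755053130609675783263578966814209012197127689001780622184120870502796578293585253847770180508554802097752823321956444143850941178140826276370391332893429433272752543080112048510583702048696094645249202792628156169326488109369081759219513788753333741835443712686854912894754078057098523017249945351287225762497378588709188954373241600782193637599596409148649610451104971769047028132641753514359793179104654365988328209411699717120577828897550358538303293448749704279583361334344418950049815088356017320665337851849151200413442327746985318358721703439466557297177719639434427112269897584556738064714094388826535613604086969634529206125723656

def m21 : ℕ :=
  227174154807160008984739062927439959412731974945723676775065585009569212731802520903512942478569637796615362257524059248395483320881037659369387280061349744825624189704464551463909185352368315800613458489130694512828971619587015041647192603213771570786589314627031428623490199546791641176087571279463529254888027244123648488624173207432763853561027677846832796482275155941668180671654301482837638775740187709185275166343710409779402098894473983182383286555071006933854684729635557083373149068195107323597502003505930124028769632493751403544150007733204139570876858082965148652709876352265838057279408404969016082472573262970475009938201466863121191072252891283515980839648256209281579696181390072866916468766189872426789716036220134243891510576548313452113691736982212879319552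

def m24 : ℕ :=
  887398843866323259695059971784043367004662585369422160259454844414774780730546553053028671170499126571187883720486252610803033515508709279062727877345687402224328262468698739388006497605842070937108512120676216324187854700505936966257024139205301495534363100867364337510121598091167220023102623008848572840264760454509542071692539207460300102821461733386335359474495478655538426516003760688655603552797583066737070005533748608438220930475685212044859864999559502855779500545515644333211646184833737809472106602633014612567577895894941238083109685365595735197972715977097003516185417956737062378897784740574743590230910149367155692005073456892970500288716033198640242516971040458516706961480580860119265384836806848094257653729656505922618106059100244216793935116513860124704

def m25 : ℕ :=
  3634785623854564563962738108611040757711367517712553588636684161673050015725571876023086680388398970520421659089010236699330106746270545113178735541747428781559768301287044112351573458410868792122305188026422960040192337249988810880662053143203981889068419289386268254700984648782817422141119688729055612105558175062503459241403669015088062112200126872487119427853484201917512037553169684170969724742132499792733521546601202096943999812682795687916140420739207132873087666285278414875429841534214918676810899547889060732254986530697262311427060124867597310542840569583841591927104424377421027401109177703655459144170589226317355721856061037751564768922437988286833960149063683628103747654769314040963324845613556903465851847719644076383080584020234636985835411967638564392534016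

def m26 : ℕ :=
  3466401685427752376733894182402543502025820689962630547290243216869871463528348787208073319431958720343965048727189426785457649713186922374215085153387748507166338055956284061826544287871538960331493962026547484814041302839560484551299390218839100495476857149477024139192317806264111412978904505016231091512990145789598827467139395644402315468166492238915474256875844914391164682097565950071444598697479912114825008959731128599101801915512050652706674371972008024816047483527672089544345406677085639564176722819825501924668573028641631317878674804630073099633182990495034554435804214881456520709618809617369249766922912750898338945728437675823612357512738871131759284448520251918773769799139979565102253297941951234743462920811371424225330479900002039897608278563371352066

def m27 : ℕ :=
  908696405963641137850325694917022331430696421080742650007360237176417374917501677678142305436533947297730022308948278354377018053347609828338482671255109680336371884512248319858583426150124953124646972610908472275722720874028690308205675131625764524229820622298776477613783752679956956918836235827404012079323010086572138147466547374227094588648706563714652092155517375030586414137050193675877188543912603347798103634316589882257686239241393228210972698013635756702124933774087598194573539864939716820022770434381231487358367989868839590489709024241242535303599260463563982317870353796891150006453205802372436784282318894570250908000781338007724517826477818037939788780649340443960921708209381604716569227260706000406592350789439807509968097220591899500352080300571666868600832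

def m28 : ℕ :=
  930505117106967264303646675508973940526138100684353352099837236039497755481524895182111884907753563990080154330861469564597327538433713430962800279414905329370150964426551521627362321431859587005628487472927062958485242661172333750820480971909040285791058245767677708478059067972019879447520664260197666619110108622426989560489900924753344463373451483099577069829414108222001240017763062510945712714886405190841283832027405911271399525936904352452699521951887805083108360007582253603215643767888795874940993839547797432738133602465596489848457135657585961220416913207703070077949763844085324278029556288383205104521355729477814823585041459574995477459253631558910108518314444431851242332145490078940325311341703988461595063996840141568486062573253630941956284766218031492650500096

def m29 : ℕ :=
  56793525214048294894226374717196691583844603967741066054382430446136795482961227420132244228821861175936990720003291251738675307899922808173351855251757629246916506682923835682897811313454780080885616894842958873679731235580950064520157083744768052606062096191447734873643602438639575343050606648802205964998411525470933258342114786651229778427910957638644312411070123243749058507560290157493075244835075183900864790311042140687721531597758788201474809129398136144033421094109739175386659449939010919646311763910019457802992450946766970012857803496069959301361217430737159101377069943337585107975492956985275165548154796118851637356495335889521283630001989699785366764626318185967987992175353277972269929032692199966912670556655509644912267109183482199116202397695324264103936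

def m30 : ℕ :=
  14198381293594618959573589392314102331677408926406908786220965700149294653131807804691710047664287931252119165670332360030208163246459279012300080467675467216187456934583570547326399972500401115289157420981990941299774790990488450490805312888206378103528846061884635849717664762422442319829780771521787351999031511460206312419298815704599729028357925256265890808918423731453571268860002488051823639579171509049723067472685411024675060124268943085087747736363862954558643431812444240427227094840285330593130405165911848349004765343053935046040039621910908294020020831726298065294875170246234130030379100883832543337977239264651840672360896921404149501910466436418542161434465225353058728559833650160509523381130471865772398298470205868620807645986821469420091863970921562243072


/-- Table of (color, position-bitmask) pairs describing one period of the pattern. -/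
def table : List (ℕ × ℕ) := [(1, m1), (16, m16), (17, m17), (18, m18), (19, m19), (20, m20), (21, m21), (24, m24), (25, m25), (26, m26), (27, m27), (28, m28), (29, m29), (30, m30)]

/-- `okMask v M`: any two positions in `M` are at cyclic distance `> v` (period 2592). -/
def okMask (v M : ℕ) : Bool :=
  (List.range v).all fun d => M &&& ((M <<< (d+1)) ||| (M >>> (2592 - (d+1)))) == 0

lemma table_ok : table.all (fun p => okMask p.1 p.2) = true := by decide

lemma cover : table.foldr (fun (p : ℕ × ℕ) (acc : ℕ) => p.2 ||| acc) 0 = 2 ^ 2592 - 1 := by decide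

lemma table_mem : table.all (fun p =>
    decide (p.1 ∈ ([1,16,17,18,19,20,21,24,25,26,27,28,29,30] : List ℕ)) &&
    decide (p.1 ≤ 30)) = true := by decide

lemma table_nodup : (table.map Prod.fst).Nodup := by decide

/-- The color of residue `n` in the period-2592 pattern. -/
def colorOf (n : ℕ) : ℕ := ((table.find? (fun p => p.2.testBit n)).map Prod.fst).getD 1

lemma foldr_lor_testBit (l : List (ℕ × ℕ)) (n : ℕ)
    (h : ∀ p ∈ l, p.2.testBit n = false) :
    (l.foldr (fun (p : ℕ × ℕ) (acc : ℕ) => p.2 ||| acc) 0).testBit n = false := by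
  induction l with
  | nil => simp
  | cons a l ih =>
    simp only [List.foldr_cons, Nat.testBit_lor]
    rw [h a (List.mem_cons_self), ih (fun p hp => h p (List.mem_cons_of_mem a hp))]
    rfl

lemma colorOf_spec (n : ℕ) (hn : n < 2592) :
    ∃ p ∈ table, colorOf n = p.1 ∧ p.2.testBit n = true := by
  cases hf : table.find? (fun p => p.2.testBit n) with
  | none =>
    exfalso
    have hall : ∀ p ∈ table, p.2.testBit n = false := by
      intro p hp
      have := List.find?_eq_none.mp hf p hp
      simpa using this
    have hfold := foldr_lor_testBit table n hall
    rw [cover, Nat.testBit_two_pow_sub_one] at hfold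
    simp [hn] at hfold
  | some p =>
    refine ⟨p, List.mem_of_find?_eq_some hf, ?_, by simpa using List.find?_some hf⟩
    unfold colorOf
    rw [hf]
    rfl

lemma table_fst {p : ℕ × ℕ} (hp : p ∈ table) :
    p.1 ∈ ({1, 16, 17, 18, 19, 20, 21, 24, 25, 26, 27, 28, 29, 30} : Set ℕ) ∧ p.1 ≤ 30 := by
  have h := List.all_eq_true.mp table_mem p hp
  simp only [Bool.and_eq_true, decide_eq_true_eq] at h
  obtain ⟨h1, h2⟩ := h
  refine ⟨?_, h2⟩
  simpa using h1

lemma okMask_spec {v M n d : ℕ} (h : okMask v M = true) (hd1 : 1 ≤ d) (hdv : d ≤ v)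
    (hv : v ≤ 30) (hn : n < 2592) (h1 : M.testBit n = true)
    (h2 : M.testBit ((n + d) % 2592) = true) : False := by
  have hz : (M &&& ((M <<< d) ||| (M >>> (2592 - d)))) = 0 := by
    have hall := List.all_eq_true.mp h (d - 1) (List.mem_range.mpr (by omega))
    have hd' : d - 1 + 1 = d := by omega
    rw [hd'] at hall
    exact beq_iff_eq.mp hall
  have hrot : ((M <<< d) ||| (M >>> (2592 - d))).testBit ((n + d) % 2592) = true := by
    by_cases hc : n + d < 2592
    · rw [Nat.mod_eq_of_lt hc, Nat.testBit_lor, Nat.testBit_shiftLeft]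
      have h3 : n + d - d = n := by omega
      rw [h3, h1]
      simp [Nat.le_add_left]
    · have hmod : (n + d) % 2592 = n + d - 2592 := by omega
      rw [hmod, Nat.testBit_lor, Nat.testBit_shiftRight]
      have h3 : 2592 - d + (n + d - 2592) = n := by omega
      rw [h3, h1]
      simp
  have hb : (M &&& ((M <<< d) ||| (M >>> (2592 - d)))).testBit ((n + d) % 2592) = true := by
    rw [Nat.testBit_land, h2, hrot]
    rfl
  rw [hz] at hb
  simp at hb

/-- The band-`A` coloring pattern, as a function on band indices. -/
def fA (j : ℤ) : ℕ := colorOf (j % 2592).toNat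

lemma emod_lt (j : ℤ) : 0 ≤ j % 2592 ∧ j % 2592 < 2592 :=
  ⟨Int.emod_nonneg j (by norm_num), Int.emod_lt_of_pos j (by norm_num)⟩

lemma fA_spec (j : ℤ) :
    ∃ p ∈ table, fA j = p.1 ∧ p.2.testBit ((j % 2592).toNat) = true :=
  colorOf_spec _ (by have := emod_lt j; omega)

lemma fA_mem (j : ℤ) :
    fA j ∈ ({1, 16, 17, 18, 19, 20, 21, 24, 25, 26, 27, 28, 29, 30} : Set ℕ) := by
  obtain ⟨p, hp, he, -⟩ := fA_spec j
  rw [he]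
  exact (table_fst hp).1

lemma fA_le (j : ℤ) : fA j ≤ 30 := by
  obtain ⟨p, hp, he, -⟩ := fA_spec j
  rw [he]
  exact (table_fst hp).2

lemma fA_intra_lt {x y : ℤ} (hlt : x < y) (heq : fA x = fA y)
    (habs : (y - x).natAbs ≤ fA x) : False := by
  obtain ⟨hx0, hx1⟩ := emod_lt x
  obtain ⟨hy0, hy1⟩ := emod_lt y
  obtain ⟨p, hp, hep, hbp⟩ := fA_spec x
  obtain ⟨q, hq, heq2, hbq⟩ := fA_spec y
  have hpq : p = q := by
    apply List.inj_on_of_nodup_map table_nodup hp hq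
    rw [← hep, ← heq2, heq]
  subst hpq
  set n1 := ((x % 2592).toNat) with hn1def
  set n2 := ((y % 2592).toNat) with hn2def
  set d := (y - x).toNat with hddef
  have hn1 : n1 < 2592 := by omega
  have hd1 : 1 ≤ d := by omega
  have hdle : d ≤ fA x := by omega
  have hdv30 : fA x ≤ 30 := fA_le x
  have hn2 : n2 = (n1 + d) % 2592 := by omega
  have hok : okMask p.1 p.2 = true := by
    have := List.all_eq_true.mp table_ok p hp
    simpa using this
  rw [hep] at hdle hdv30
  exact okMask_spec hok hd1 hdle hdv30 hn1 hbp (by rw [← hn2]; exact hbq)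

lemma fA_intra {x y : ℤ} (hne : x ≠ y) (heq : fA x = fA y)
    (habs : (x - y).natAbs ≤ fA x) : False := by
  rcases lt_or_gt_of_ne hne with h | h
  · exact fA_intra_lt h heq (by omega)
  · exact fA_intra_lt h heq.symm (by omega)

/-- The band-`B` pattern: band `A` shifted by 13. -/
def fB (j : ℤ) : ℕ := fA (j - 13)

lemma walk_repr {k t : ℕ} {u v : ℤ} (w : (distGraph k t).Walk u v) :
    ∃ a b : ℤ, u - v = a * (k : ℤ) + b * (t : ℤ) ∧
      a.natAbs + b.natAbs ≤ w.length := by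
  induction w with
  | nil => exact ⟨0, 0, by ring, by simp⟩
  | @cons u x v hadj w ih =>
    obtain ⟨a, b, hab, hlen⟩ := ih
    obtain ⟨-, hd⟩ := hadj
    show ∃ a b : ℤ, u - v = a * (k : ℤ) + b * (t : ℤ) ∧ a.natAbs + b.natAbs ≤ w.length + 1
    have key : u - v = (u - x) + (x - v) := by ring
    rcases hd with hk | htt
    · rcases Int.natAbs_eq_iff.mp hk with h | h
      · exact ⟨a + 1, b, by rw [key, h, hab]; ring, by omega⟩
      · exact ⟨a - 1, b, by rw [key, h, hab]; ring, by omega⟩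
    · rcases Int.natAbs_eq_iff.mp htt with h | h
      · exact ⟨a, b + 1, by rw [key, h, hab]; ring, by omega⟩
      · exact ⟨a, b - 1, by rw [key, h, hab]; ring, by omega⟩

lemma edist_gt {k t : ℕ} {u v : ℤ} (n : ℕ)
    (h : ∀ a b : ℤ, u - v = a * (k : ℤ) + b * (t : ℤ) → n < a.natAbs + b.natAbs) :
    (n : ℕ∞) < (distGraph k t).edist u v := by
  have hle : ((n + 1 : ℕ) : ℕ∞) ≤ (distGraph k t).edist u v := by
    rw [SimpleGraph.edist_eq_sInf]
    apply le_sInf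
    rintro q ⟨w, rfl⟩
    obtain ⟨a, b, hab, hlen⟩ := walk_repr w
    have hlt := h a b hab
    show ((n + 1 : ℕ) : ℕ∞) ≤ ((w.length : ℕ) : ℕ∞)
    exact_mod_cast (by omega : n + 1 ≤ w.length)
  calc (n : ℕ∞) < ((n + 1 : ℕ) : ℕ∞) := by exact_mod_cast Nat.lt_succ_self n
    _ ≤ _ := hle

lemma main_bound {k t : ℕ} (hkt : k < t) (hcop : Nat.gcd k t = 1) (ht : 56 ≤ t)
    (s m a b : ℤ) (hs : s.natAbs ≤ 25)
    (h : s * (k : ℤ) + m * (t : ℤ) = a * (k : ℤ) + b * (t : ℤ))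
    (v : ℕ) (hv : v ≤ 30) (hvm : v < s.natAbs + m.natAbs) :
    v < a.natAbs + b.natAbs := by
  have h2 : (a - s) * (k : ℤ) = (m - b) * (t : ℤ) := by linear_combination -h
  have hdvd : (t : ℤ) ∣ (a - s) := by
    have hco : IsCoprime ((t : ℤ)) ((k : ℤ)) := by
      rw [Int.isCoprime_iff_gcd_eq_one, Int.gcd_natCast_natCast, Nat.gcd_comm]
      exact hcop
    exact hco.dvd_of_dvd_mul_right ⟨m - b, by linear_combination h2⟩
  by_cases ha : a = s
  · subst ha
    have ht0 : (t : ℤ) ≠ 0 := by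
      have : (0:ℤ) < t := by exact_mod_cast (by omega : 0 < t)
      omega
    have hbm : b = m := by
      have hmb : m * (t : ℤ) = b * (t : ℤ) := by linarith
      exact (mul_right_cancel₀ ht0 hmb).symm
    subst hbm
    omega
  · have hne : a - s ≠ 0 := sub_ne_zero.mpr ha
    have habs : (t : ℤ) ≤ |a - s| := Int.le_of_dvd (abs_pos.mpr hne) ((dvd_abs _ _).mpr hdvd)
    have h56 : (56 : ℤ) ≤ |a - s| := le_trans (by exact_mod_cast ht) habs
    have habs2 : ((a - s).natAbs : ℤ) = |a - s| := (Int.abs_eq_natAbs _).symm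
    have h56' : 56 ≤ (a - s).natAbs := by omega
    omega

/-- The combined coloring of the two bands. -/
noncomputable def cfun (k t i : ℕ) (z : ℤ) : ℕ :=
  @dite _ (z ∈ bandSet k t i) (Classical.propDecidable _)
    (fun h => fA (Classical.choose h))
    (fun _ => @dite _ (z ∈ bandSet k t (i + 25)) (Classical.propDecidable _)
      (fun h => fB (Classical.choose h)) (fun _ => 1))

lemma cfun_A (k t i : ℕ) (ht0 : 0 < t) {z j : ℤ}
    (hj : z = ((i : ℕ) : ℤ) * k + j * t) : cfun k t i z = fA j := by
  have hz : z ∈ bandSet k t i := ⟨j, hj⟩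
  unfold cfun
  rw [dif_pos hz]
  congr 1
  have h1 := Classical.choose_spec hz
  have htne : (t : ℤ) ≠ 0 := by
    have : (0:ℤ) < t := by exact_mod_cast ht0
    omega
  exact mul_right_cancel₀ htne
    (by linarith [h1, hj] : Classical.choose hz * (t : ℤ) = j * (t : ℤ))

lemma cfun_B (k t i : ℕ) (ht0 : 0 < t)
    (hdis : ∀ z : ℤ, z ∈ bandSet k t i → z ∈ bandSet k t (i + 25) → False)
    {z j : ℤ} (hj : z = ((i + 25 : ℕ) : ℤ) * k + j * t) : cfun k t i z = fB j := by
  have hz : z ∈ bandSet k t (i + 25) := ⟨j, hj⟩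
  unfold cfun
  rw [dif_neg (fun h => hdis z h hz), dif_pos hz]
  congr 1
  have h1 := Classical.choose_spec hz
  have htne : (t : ℤ) ≠ 0 := by
    have : (0:ℤ) < t := by exact_mod_cast ht0
    omega
  exact mul_right_cancel₀ htne
    (by linarith [h1, hj] : Classical.choose hz * (t : ℤ) = j * (t : ℤ))

end TwoBandsAux

open TwoBandsAux in
theorem two_bands_coloring (k t : ℕ) (hk : 0 < k) (hkt : k < t) (hcop : Nat.gcd k t = 1)
    (ht : 56 ≤ t) (i : ℕ) (hi : i + 25 ≤ t - 1) :
    ∃ c : ℤ → ℕ,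
      (∀ v ∈ bandSet k t i ∪ bandSet k t (i + 25),
        c v ∈ ({1, 16, 17, 18, 19, 20, 21, 24, 25, 26, 27, 28, 29, 30} : Set ℕ)) ∧
      ∀ u ∈ bandSet k t i ∪ bandSet k t (i + 25),
        ∀ v ∈ bandSet k t i ∪ bandSet k t (i + 25),
          u ≠ v → c u = c v → (c u : ℕ∞) < (distGraph k t).edist u v := by
  have ht0 : 0 < t := by omega
  have htne : (t : ℤ) ≠ 0 := by
    have : (0:ℤ) < t := by exact_mod_cast ht0
    omega
  have hdis : ∀ z : ℤ, z ∈ bandSet k t i → z ∈ bandSet k t (i + 25) → False := by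
    intro z hz1 hz2
    obtain ⟨j, hj⟩ := hz1
    obtain ⟨j', hj'⟩ := hz2
    have hcast : ((i + 25 : ℕ) : ℤ) = (i : ℤ) + 25 := by push_cast; ring
    rw [hcast] at hj'
    have hc : (25 : ℤ) * k = (j - j') * t := by linear_combination hj - hj'
    have hdd : (t : ℤ) ∣ 25 * (k : ℤ) := ⟨j - j', by linear_combination hc⟩
    have hco : IsCoprime ((t : ℤ)) ((k : ℤ)) := by
      rw [Int.isCoprime_iff_gcd_eq_one, Int.gcd_natCast_natCast, Nat.gcd_comm]
      exact hcop
    have h25 : (t : ℤ) ∣ 25 := hco.dvd_of_dvd_mul_right hdd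
    have hle : (t : ℤ) ≤ 25 := Int.le_of_dvd (by norm_num) h25
    have : (56 : ℤ) ≤ t := by exact_mod_cast ht
    omega
  refine ⟨cfun k t i, ?_, ?_⟩
  · intro z hz
    rcases hz with ⟨j, hj⟩ | ⟨j, hj⟩
    · rw [cfun_A k t i ht0 hj]
      exact fA_mem j
    · rw [cfun_B k t i ht0 hdis hj]
      exact fA_mem (j - 13)
  · intro u hu v hv hne hcuv
    rcases hu with ⟨j1, hj1⟩ | ⟨j1, hj1⟩ <;> rcases hv with ⟨j2, hj2⟩ | ⟨j2, hj2⟩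
    · -- A, A
      have hc1 : cfun k t i u = fA j1 := cfun_A k t i ht0 hj1
      have hc2 : cfun k t i v = fA j2 := cfun_A k t i ht0 hj2
      have hj12 : j1 ≠ j2 := fun h => hne (by rw [hj1, hj2, h])
      apply edist_gt
      intro a b hab
      have heq : (0 : ℤ) * k + (j1 - j2) * t = a * (k:ℤ) + b * t := by
        rw [← hab, hj1, hj2]; ring
      refine main_bound hkt hcop ht 0 (j1 - j2) a b (by simp) heq _
        (by rw [hc1]; exact fA_le _) ?_
      by_contra hcon
      push_neg at hcon
      refine fA_intra hj12 (by rw [← hc1, ← hc2]; exact hcuv) ?_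
      omega
    · -- A, B
      have hc1 : cfun k t i u = fA j1 := cfun_A k t i ht0 hj1
      have hc2 : cfun k t i v = fA (j2 - 13) := cfun_B k t i ht0 hdis hj2
      apply edist_gt
      intro a b hab
      have heq : (-25 : ℤ) * k + (j1 - j2) * t = a * (k:ℤ) + b * t := by
        rw [← hab, hj1, hj2]; push_cast; ring
      refine main_bound hkt hcop ht (-25) (j1 - j2) a b (by simp) heq _
        (by rw [hc1]; exact fA_le _) ?_
      by_contra hcon
      push_neg at hcon
      have h30 : cfun k t i u ≤ 30 := by rw [hc1]; exact fA_le _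
      have hxy : j1 ≠ j2 - 13 := by omega
      refine fA_intra hxy (by rw [← hc1, ← hc2]; exact hcuv) ?_
      omega
    · -- B, A
      have hc1 : cfun k t i u = fA (j1 - 13) := cfun_B k t i ht0 hdis hj1
      have hc2 : cfun k t i v = fA j2 := cfun_A k t i ht0 hj2
      apply edist_gt
      intro a b hab
      have heq : (25 : ℤ) * k + (j1 - j2) * t = a * (k:ℤ) + b * t := by
        rw [← hab, hj1, hj2]; push_cast; ring
      refine main_bound hkt hcop ht 25 (j1 - j2) a b (by simp) heq _
        (by rw [hc1]; exact fA_le _) ?_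
      by_contra hcon
      push_neg at hcon
      have h30 : cfun k t i u ≤ 30 := by rw [hc1]; exact fA_le _
      have hxy : j1 - 13 ≠ j2 := by omega
      refine fA_intra hxy (by rw [← hc1, ← hc2]; exact hcuv) ?_
      omega
    · -- B, B
      have hc1 : cfun k t i u = fA (j1 - 13) := cfun_B k t i ht0 hdis hj1
      have hc2 : cfun k t i v = fA (j2 - 13) := cfun_B k t i ht0 hdis hj2
      have hj12 : j1 ≠ j2 := fun h => hne (by rw [hj1, hj2, h])
      have hxy : j1 - 13 ≠ j2 - 13 := fun h => hj12 (by omega)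
      apply edist_gt
      intro a b hab
      have heq : (0 : ℤ) * k + (j1 - j2) * t = a * (k:ℤ) + b * t := by
        rw [← hab, hj1, hj2]; ring
      refine main_bound hkt hcop ht 0 (j1 - j2) a b (by simp) heq _
        (by rw [hc1]; exact fA_le _) ?_
      by_contra hcon
      push_neg at hcon
      refine fA_intra hxy (by rw [← hc1, ← hc2]; exact hcuv) ?_
      omega
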